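/- arXiv:2201.10117 — 2 statements merged into one kernel-verified Lean document; each statement's English description precedes it below -/
import Mathlib

section
/- For n ≥ 1 and complex x, ∑_{k=0}^{⌊n/2⌋} (1-q)^{2k} B^{(1)}_{n-2k,α}(-x/2;q)/(2^{2k}[n-2k]_q!(q²;q²)_k(q^{2α+2};q²)_k) = (-1/2)^n H_n(x)/[n]_q!, where H_n(x) = ∑_{j=0}^n [n choose j]_q x^j. -/
set_option maxHeartbeats 1000000


/-- The q-shifted factorial `(a;q)_n`. -/
noncomputable def qPoch (a q : ℂ) (n : ℕ) : ℂ := ∏ k ∈ Finset.range n, (1 - a * q ^ k)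

/-- The q-factorial `[n]_q!`. -/
noncomputable def qFact (q : ℂ) (n : ℕ) : ℂ := qPoch q q n / (1 - q) ^ n

/-- The Gaussian binomial coefficient. -/
noncomputable def qBinom (q : ℂ) (n k : ℕ) : ℂ :=
  qPoch q q n / (qPoch q q k * qPoch q q (n - k))

/-- `β : ℕ → ℂ` is the sequence of generalized q-Bernoulli numbers `β_{n,α}(q)`:
`β_0 = 1` and for `n ≥ 1`,
`∑_{k=0}^{⌊n/2⌋} (1-q)^{2k} β_{n-2k} / (2^{2k} [n-2k]_q! (q²;q²)_k (q^{2α+2};q²)_k)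
  = (-1/2)^n / [n]_q!`. -/
def qBetaSpec (q α : ℝ) (β : ℕ → ℂ) : Prop :=
  β 0 = 1 ∧ ∀ n : ℕ, 1 ≤ n →
    ∑ k ∈ Finset.range (n / 2 + 1),
      ((1 : ℂ) - q) ^ (2 * k) * β (n - 2 * k) /
        (2 ^ (2 * k) * qFact (q : ℂ) (n - 2 * k) *
          qPoch ((q : ℂ) ^ 2) ((q : ℂ) ^ 2) k *
          qPoch (((q ^ (2 * α + 2) : ℝ) : ℂ)) ((q : ℂ) ^ 2) k)
      = (-1 / 2) ^ n / qFact (q : ℂ) n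

/-- `B^{(1)}_{n,α}(x;q)`. -/
noncomputable def B1poly (q : ℂ) (c : ℕ → ℂ) (n : ℕ) (x : ℂ) : ℂ :=
  ∑ k ∈ Finset.range (n + 1), qBinom q n k * c (n - k) * x ^ k

/-- Al-Salam's polynomial `H_n(x) = ∑_{j=0}^n [n,j]_q x^j`. -/
noncomputable def alSalamH (q x : ℂ) (n : ℕ) : ℂ :=
  ∑ j ∈ Finset.range (n + 1), qBinom q n j * x ^ j

lemma sub_ne (q : ℝ) (hq1 : q < 1) : (1 : ℂ) - (q : ℂ) ≠ 0 := by
  intro h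
  have : (1 : ℝ) - q = 0 := by exact_mod_cast h
  linarith

lemma qPochR_ne (a b : ℝ) (ha0 : 0 < a) (ha1 : a < 1) (hb0 : 0 ≤ b) (hb1 : b ≤ 1) (m : ℕ) :
    qPoch (a : ℂ) (b : ℂ) m ≠ 0 := by
  unfold qPoch
  rw [Finset.prod_ne_zero_iff]
  intro k _
  have h1 : b ^ k ≤ 1 := pow_le_one₀ hb0 hb1
  have h2 : (0:ℝ) ≤ b ^ k := pow_nonneg hb0 k
  have hlt : a * b ^ k < 1 := by nlinarith
  intro h
  have : (1 : ℝ) - a * b ^ k = 0 := by exact_mod_cast h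
  linarith

lemma qPoch_ne (q : ℝ) (hq : 0 < q) (hq1 : q < 1) (m : ℕ) :
    qPoch (q : ℂ) (q : ℂ) m ≠ 0 := qPochR_ne q q hq hq1 hq.le hq1.le m

lemma qFact_ne (q : ℝ) (hq : 0 < q) (hq1 : q < 1) (m : ℕ) :
    qFact (q : ℂ) m ≠ 0 := by
  unfold qFact
  exact div_ne_zero (qPoch_ne q hq hq1 m) (pow_ne_zero _ (sub_ne q hq1))

lemma qBinom_eq (q : ℝ) (hq : 0 < q) (hq1 : q < 1) {m j : ℕ} (hj : j ≤ m) :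
    qBinom (q : ℂ) m j = qFact (q : ℂ) m / (qFact (q : ℂ) j * qFact (q : ℂ) (m - j)) := by
  unfold qBinom qFact
  have h1 := qPoch_ne q hq hq1 j
  have h2 := qPoch_ne q hq hq1 (m - j)
  have h3 := sub_ne q hq1
  have hpow : ((1 : ℂ) - q) ^ j * ((1 : ℂ) - q) ^ (m - j) = ((1 : ℂ) - q) ^ m := by
    rw [← pow_add, Nat.add_sub_cancel' hj]
  field_simp
  linear_combination (-qPoch (q:ℂ) q m) * hpow

lemma keyA (Fm Fj Fd P1 P2 c A b y : ℂ) (hFm : Fm ≠ 0) (hFj : Fj ≠ 0) (hFd : Fd ≠ 0)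
    (hP1 : P1 ≠ 0) (hP2 : P2 ≠ 0) (hc : c ≠ 0) :
    A * (Fm / (Fj * Fd) * b * y) / (c * Fm * P1 * P2)
      = y / Fj * (A * b / (c * Fd * P1 * P2)) := by
  field_simp

lemma keyD (Fn Fj Fd t u v w : ℂ) (h1 : Fn ≠ 0) (h2 : Fj ≠ 0) (h3 : Fd ≠ 0)
    (huv : u * v = w) :
    u * t / Fj * (v / Fd) = w * (Fn / (Fj * Fd) * t) / Fn := by
  field_simp
  linear_combination t * huv

/-- For `n ≥ 1` and complex `x`,
`∑_{k=0}^{⌊n/2⌋} (1-q)^{2k} B^{(1)}_{n-2k,α}(-x/2;q) /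
  (2^{2k}[n-2k]_q!(q²;q²)_k(q^{2α+2};q²)_k) = (-1/2)^n H_n(x)/[n]_q!`. -/
theorem stmt15 (q α : ℝ) (hq : 0 < q) (hq1 : q < 1) (hα : -1 < α)
    (β : ℕ → ℂ) (hβ : qBetaSpec q α β) :
    ∀ n : ℕ, 1 ≤ n → ∀ x : ℂ,
      ∑ k ∈ Finset.range (n / 2 + 1),
        ((1 : ℂ) - q) ^ (2 * k) * B1poly (q : ℂ) β (n - 2 * k) (-x / 2) /
          (2 ^ (2 * k) * qFact (q : ℂ) (n - 2 * k) *
            qPoch ((q : ℂ) ^ 2) ((q : ℂ) ^ 2) k *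
            qPoch (((q ^ (2 * α + 2) : ℝ) : ℂ)) ((q : ℂ) ^ 2) k)
        = (-1 / 2) ^ n * alSalamH (q : ℂ) x n / qFact (q : ℂ) n := by
  intro n hn x
  -- the recursion holds for all m including 0
  have hE : ∀ m : ℕ,
      ∑ k ∈ Finset.range (m / 2 + 1),
        ((1 : ℂ) - q) ^ (2 * k) * β (m - 2 * k) /
          (2 ^ (2 * k) * qFact (q : ℂ) (m - 2 * k) *
            qPoch ((q : ℂ) ^ 2) ((q : ℂ) ^ 2) k *
            qPoch (((q ^ (2 * α + 2) : ℝ) : ℂ)) ((q : ℂ) ^ 2) k)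
        = (-1 / 2) ^ m / qFact (q : ℂ) m := by
    intro m
    rcases Nat.eq_zero_or_pos m with h | h
    · subst h
      simp [qFact, qPoch, hβ.1]
    · exact hβ.2 m h
  have hP1ne : ∀ k : ℕ, qPoch ((q : ℂ) ^ 2) ((q : ℂ) ^ 2) k ≠ 0 := by
    intro k
    have : ((q : ℂ) ^ 2) = (((q ^ 2 : ℝ)) : ℂ) := by push_cast; ring
    rw [this]
    exact qPochR_ne _ _ (by positivity) (by nlinarith) (by positivity) (by nlinarith) k
  have hP2ne : ∀ k : ℕ, qPoch (((q ^ (2 * α + 2) : ℝ)) : ℂ) ((q : ℂ) ^ 2) k ≠ 0 := by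
    intro k
    have h2 : ((q : ℂ) ^ 2) = (((q ^ 2 : ℝ)) : ℂ) := by push_cast; ring
    rw [h2]
    exact qPochR_ne _ _ (Real.rpow_pos_of_pos hq _)
      (Real.rpow_lt_one hq.le hq1 (by linarith)) (by positivity) (by nlinarith) k
  have hFne := qFact_ne q hq hq1
  -- Step A: expand B1poly
  have stepA : ∀ k ∈ Finset.range (n / 2 + 1),
      ((1 : ℂ) - q) ^ (2 * k) * B1poly (q : ℂ) β (n - 2 * k) (-x / 2) /
          (2 ^ (2 * k) * qFact (q : ℂ) (n - 2 * k) *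
            qPoch ((q : ℂ) ^ 2) ((q : ℂ) ^ 2) k *
            qPoch (((q ^ (2 * α + 2) : ℝ) : ℂ)) ((q : ℂ) ^ 2) k)
      = ∑ j ∈ Finset.range (n - 2 * k + 1),
          ((-x / 2) ^ j / qFact (q : ℂ) j) *
            (((1 : ℂ) - q) ^ (2 * k) * β (n - 2 * k - j) /
              (2 ^ (2 * k) * qFact (q : ℂ) (n - 2 * k - j) *
                qPoch ((q : ℂ) ^ 2) ((q : ℂ) ^ 2) k *
                qPoch (((q ^ (2 * α + 2) : ℝ) : ℂ)) ((q : ℂ) ^ 2) k)) := by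
    intro k _
    unfold B1poly
    rw [Finset.mul_sum, Finset.sum_div]
    refine Finset.sum_congr rfl fun j hj => ?_
    have hjle : j ≤ n - 2 * k := Nat.lt_succ_iff.mp (Finset.mem_range.mp hj)
    rw [qBinom_eq q hq hq1 hjle]
    have h1 := hFne (n - 2 * k)
    have h2 := hFne j
    have h3 := hFne (n - 2 * k - j)
    have h4 := hP1ne k
    have h5 := hP2ne k
    have h6 : (2 : ℂ) ^ (2 * k) ≠ 0 := pow_ne_zero _ two_ne_zero
    exact keyA _ _ _ _ _ _ _ _ _ h1 h2 h3 h4 h5 h6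
  rw [Finset.sum_congr rfl stepA]
  -- Step B: swap order of summation
  have stepB :
      ∑ k ∈ Finset.range (n / 2 + 1), ∑ j ∈ Finset.range (n - 2 * k + 1),
          ((-x / 2) ^ j / qFact (q : ℂ) j) *
            (((1 : ℂ) - q) ^ (2 * k) * β (n - 2 * k - j) /
              (2 ^ (2 * k) * qFact (q : ℂ) (n - 2 * k - j) *
                qPoch ((q : ℂ) ^ 2) ((q : ℂ) ^ 2) k *
                qPoch (((q ^ (2 * α + 2) : ℝ) : ℂ)) ((q : ℂ) ^ 2) k))
      = ∑ j ∈ Finset.range (n + 1), ∑ k ∈ Finset.range ((n - j) / 2 + 1),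
          ((-x / 2) ^ j / qFact (q : ℂ) j) *
            (((1 : ℂ) - q) ^ (2 * k) * β ((n - j) - 2 * k) /
              (2 ^ (2 * k) * qFact (q : ℂ) ((n - j) - 2 * k) *
                qPoch ((q : ℂ) ^ 2) ((q : ℂ) ^ 2) k *
                qPoch (((q ^ (2 * α + 2) : ℝ) : ℂ)) ((q : ℂ) ^ 2) k)) := by
    rw [Finset.sum_sigma', Finset.sum_sigma']
    refine Finset.sum_nbij' (fun p => ⟨p.2, p.1⟩) (fun p => ⟨p.2, p.1⟩) ?_ ?_ ?_ ?_ ?_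
    · rintro ⟨k, j⟩ hp
      simp only [Finset.mem_sigma, Finset.mem_range] at hp ⊢
      omega
    · rintro ⟨j, k⟩ hp
      simp only [Finset.mem_sigma, Finset.mem_range] at hp ⊢
      omega
    · rintro ⟨k, j⟩ _; rfl
    · rintro ⟨j, k⟩ _; rfl
    · rintro ⟨k, j⟩ hp
      simp only [Finset.mem_sigma, Finset.mem_range] at hp
      have : n - 2 * k - j = (n - j) - 2 * k := by omega
      rw [this]
  rw [stepB]
  -- Step C: apply recursion at n - j
  have stepC : ∀ j ∈ Finset.range (n + 1),
      ∑ k ∈ Finset.range ((n - j) / 2 + 1),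
          ((-x / 2) ^ j / qFact (q : ℂ) j) *
            (((1 : ℂ) - q) ^ (2 * k) * β ((n - j) - 2 * k) /
              (2 ^ (2 * k) * qFact (q : ℂ) ((n - j) - 2 * k) *
                qPoch ((q : ℂ) ^ 2) ((q : ℂ) ^ 2) k *
                qPoch (((q ^ (2 * α + 2) : ℝ) : ℂ)) ((q : ℂ) ^ 2) k))
      = ((-x / 2) ^ j / qFact (q : ℂ) j) * ((-1 / 2) ^ (n - j) / qFact (q : ℂ) (n - j)) := by
    intro j _
    rw [← Finset.mul_sum, hE (n - j)]
  rw [Finset.sum_congr rfl stepC]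
  -- Step D: conclude
  unfold alSalamH
  rw [Finset.mul_sum, Finset.sum_div]
  refine Finset.sum_congr rfl fun j hj => ?_
  have hjle : j ≤ n := Nat.lt_succ_iff.mp (Finset.mem_range.mp hj)
  rw [qBinom_eq q hq hq1 hjle]
  have h1 := hFne n
  have h2 := hFne j
  have h3 := hFne (n - j)
  have hy : (-x / 2 : ℂ) ^ j = (-1 / 2 : ℂ) ^ j * x ^ j := by
    rw [← mul_pow]
    congr 1
    ring
  have hpow : (-1 / 2 : ℂ) ^ j * (-1 / 2 : ℂ) ^ (n - j) = (-1 / 2 : ℂ) ^ n := by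
    rw [← pow_add, Nat.add_sub_cancel' hjle]
  rw [hy]
  exact keyD _ _ _ _ _ _ _ h1 h2 h3 hpow
end

section
/- For n ≥ 1, lim_{α→∞} β_{n,α}(q) = (-1)^n 2^{-n} q^{n(n-1)/2}. -/
lemma qPoch_succ (a q : ℂ) (n : ℕ) : qPoch a q (n+1) = qPoch a q n * (1 - a * q ^ n) := by
  simp [qPoch, Finset.prod_range_succ]

lemma qPoch_zero (a q : ℂ) : qPoch a q 0 = 1 := by simp [qPoch]

lemma natC (m : ℕ) : (m+1)*((m+1)-1)/2 = m*(m-1)/2 + m := by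
  have h1' : (m+1)*((m+1)-1)/2 = (m+1).choose 2 := (Nat.choose_two_right (m+1)).symm
  have h2 : m*(m-1)/2 = m.choose 2 := (Nat.choose_two_right m).symm
  rw [h1', h2, Nat.choose_succ_succ, Nat.choose_one_right, Nat.add_comm]

noncomputable def auxF (q : ℂ) (n : ℕ) : ℂ := q^(n*(n-1)/2) / qPoch q q n
noncomputable def auxG (q : ℂ) (k : ℕ) : ℂ := 1 / qPoch (q^2) (q^2) k
noncomputable def auxS (q : ℂ) (n : ℕ) : ℂ :=
  ∑ k ∈ Finset.range (n/2+1), auxG q k * auxF q (n-2*k)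

lemma qPoch_q_succ (q : ℂ) (n : ℕ) : qPoch q q (n+1) = qPoch q q n * (1 - q^(n+1)) := by
  rw [qPoch_succ]; ring_nf

lemma qPoch_q2_succ (q : ℂ) (k : ℕ) :
    qPoch (q^2) (q^2) (k+1) = qPoch (q^2) (q^2) k * (1 - q^(2*k+2)) := by
  rw [qPoch_succ]; ring_nf

lemma auxF_zero (q : ℂ) : auxF q 0 = 1 := by simp [auxF, qPoch_zero]
lemma auxG_zero (q : ℂ) : auxG q 0 = 1 := by simp [auxG, qPoch_zero]

section core
variable (q : ℂ) (h1 : ∀ m : ℕ, (1:ℂ) - q^(m+1) ≠ 0)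
include h1

lemma qPoch_q_ne (n : ℕ) : qPoch q q n ≠ 0 := by
  induction n with
  | zero => simp [qPoch_zero]
  | succ m ih => rw [qPoch_q_succ]; exact mul_ne_zero ih (h1 m)

lemma qPoch_q2_ne (k : ℕ) : qPoch (q^2) (q^2) k ≠ 0 := by
  induction k with
  | zero => simp [qPoch_zero]
  | succ m ih =>
      rw [qPoch_q2_succ]
      exact mul_ne_zero ih (by have := h1 (2*m+1); simpa [Nat.add_assoc] using this)

lemma lemA (m : ℕ) : (1 - q^(m+1)) * auxF q (m+1) = q^m * auxF q m := by
  rw [auxF, auxF, qPoch_q_succ, natC]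
  have hP := qPoch_q_ne q h1 m
  have hm := h1 m
  rw [pow_add q (m*(m-1)/2) m]
  field_simp

lemma lemB (k : ℕ) : (1 - q^(2*k+2)) * auxG q (k+1) = auxG q k := by
  rw [auxG, auxG, qPoch_q2_succ]
  have hP := qPoch_q2_ne q h1 k
  have hm : (1:ℂ) - q^(2*k+2) ≠ 0 := by have := h1 (2*k+1); simpa [Nat.add_assoc] using this
  field_simp

end core

section tel
variable (q : ℂ) (h1 : ∀ m : ℕ, (1:ℂ) - q^(m+1) ≠ 0)
include h1

lemma S_odd (t : ℕ) : auxS q (2*t+1) * (1 - q^(2*t+1)) = auxS q (2*t) := by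
  have hd1 : (2*t+1)/2 + 1 = t + 1 := by omega
  have hd2 : (2*t)/2 + 1 = t + 1 := by omega
  rw [auxS, auxS, hd1, hd2, Finset.sum_mul]
  have step1 : ∀ k ∈ Finset.range (t+1),
      auxG q k * auxF q (2*t+1-2*k) * (1-q^(2*t+1)) =
      auxG q k * (q^(2*(t-k)) * auxF q (2*(t-k)))
      + (1-q^(2*k)) * auxG q k * (q^(2*(t-k)+1) * auxF q (2*(t-k)+1)) := by
    intro k hk
    have hk' : k ≤ t := Nat.lt_succ_iff.mp (Finset.mem_range.mp hk)
    have e1 : 2*t+1-2*k = 2*(t-k)+1 := by omega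
    have e2 : q^(2*t+1) = q^(2*(t-k)+1) * q^(2*k) := by rw [← pow_add]; congr 1; omega
    rw [e1, e2]
    have hA := lemA q h1 (2*(t-k))
    linear_combination (auxG q k) * hA
  rw [Finset.sum_congr rfl step1, Finset.sum_add_distrib,
    Finset.sum_range_succ' (fun k => (1-q^(2*k)) * auxG q k * (q^(2*(t-k)+1) * auxF q (2*(t-k)+1))) t]
  have step2 : ∀ i ∈ Finset.range t,
      (1-q^(2*(i+1))) * auxG q (i+1) * (q^(2*(t-(i+1))+1) * auxF q (2*(t-(i+1))+1)) =
      auxG q i * (q^(2*(t-(i+1))+1) * auxF q (2*(t-(i+1))+1)) := by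
    intro i _
    have hB := lemB q h1 i
    have e : 2*(i+1) = 2*i+2 := by ring
    rw [e]
    linear_combination (q^(2*(t-(i+1))+1) * auxF q (2*(t-(i+1))+1)) * hB
  rw [Finset.sum_congr rfl step2]
  have step3 : ∀ k ∈ Finset.range (t+1),
      auxG q k * auxF q (2*t-2*k) = auxG q k * auxF q (2*(t-k)) := by
    intro k hk
    have hk' : k ≤ t := Nat.lt_succ_iff.mp (Finset.mem_range.mp hk)
    have e1 : 2*t-2*k = 2*(t-k) := by omega
    rw [e1]
  rw [Finset.sum_congr rfl step3, Finset.sum_range_succ (fun k => auxG q k * (q^(2*(t-k)) * auxF q (2*(t-k)))) t,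
    Finset.sum_range_succ (fun k => auxG q k * auxF q (2*(t-k))) t]
  have key : ∑ k ∈ Finset.range t, auxG q k * (q^(2*(t-k)) * auxF q (2*(t-k)))
      + ∑ i ∈ Finset.range t, auxG q i * (q^(2*(t-(i+1))+1) * auxF q (2*(t-(i+1))+1))
      = ∑ k ∈ Finset.range t, auxG q k * auxF q (2*(t-k)) := by
    rw [← Finset.sum_add_distrib]
    apply Finset.sum_congr rfl
    intro k hk
    have hk' : k < t := Finset.mem_range.mp hk
    have hA := lemA q h1 (2*(t-(k+1))+1)
    have e : 2*(t-(k+1))+1+1 = 2*(t-k) := by omega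
    rw [e] at hA
    linear_combination (-(auxG q k)) * hA
  have hz : (1 - q^(2*0)) * auxG q 0 * (q^(2*(t-0)+1) * auxF q (2*(t-0)+1)) = 0 := by
    simp
  rw [hz]
  rw [Nat.sub_self]
  simp only [Nat.mul_zero, pow_zero, one_mul]
  linear_combination key

lemma S_even (t : ℕ) : auxS q (2*t+2) * (1 - q^(2*t+2)) = auxS q (2*t+1) := by
  have hd1 : (2*t+2)/2 + 1 = (t+1) + 1 := by omega
  have hd2 : (2*t+1)/2 + 1 = t + 1 := by omega
  rw [auxS, auxS, hd1, hd2, Finset.sum_mul]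
  have step1 : ∀ k ∈ Finset.range ((t+1)+1),
      auxG q k * auxF q (2*t+2-2*k) * (1-q^(2*t+2)) =
      auxG q k * ((1-q^(2*(t+1-k))) * auxF q (2*(t+1-k)))
      + (1-q^(2*k)) * auxG q k * (q^(2*(t+1-k)) * auxF q (2*(t+1-k))) := by
    intro k hk
    have hk' : k ≤ t+1 := Nat.lt_succ_iff.mp (Finset.mem_range.mp hk)
    have e1 : 2*t+2-2*k = 2*(t+1-k) := by omega
    have e2 : q^(2*t+2) = q^(2*(t+1-k)) * q^(2*k) := by rw [← pow_add]; congr 1; omega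
    rw [e1, e2]
    ring
  rw [Finset.sum_congr rfl step1, Finset.sum_add_distrib,
    Finset.sum_range_succ (fun k => auxG q k * ((1-q^(2*(t+1-k))) * auxF q (2*(t+1-k)))) (t+1),
    Finset.sum_range_succ' (fun k => (1-q^(2*k)) * auxG q k * (q^(2*(t+1-k)) * auxF q (2*(t+1-k)))) (t+1)]
  have hz1 : auxG q (t+1) * ((1-q^(2*(t+1-(t+1)))) * auxF q (2*(t+1-(t+1)))) = 0 := by
    rw [Nat.sub_self]; simp
  have hz2 : (1-q^(2*0)) * auxG q 0 * (q^(2*(t+1-0)) * auxF q (2*(t+1-0))) = 0 := by simp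
  rw [hz1, hz2]
  have step2 : ∀ k ∈ Finset.range (t+1),
      auxG q k * ((1-q^(2*(t+1-k))) * auxF q (2*(t+1-k))) =
      auxG q k * (q^(2*(t-k)+1) * auxF q (2*(t-k)+1)) := by
    intro k hk
    have hk' : k < t+1 := Finset.mem_range.mp hk
    have hA := lemA q h1 (2*(t-k)+1)
    have e : 2*(t-k)+1+1 = 2*(t+1-k) := by omega
    rw [e] at hA
    linear_combination (auxG q k) * hA
  have step3 : ∀ i ∈ Finset.range (t+1),
      (1-q^(2*(i+1))) * auxG q (i+1) * (q^(2*(t+1-(i+1))) * auxF q (2*(t+1-(i+1)))) =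
      auxG q i * (q^(2*(t+1-(i+1))) * auxF q (2*(t+1-(i+1)))) := by
    intro i _
    have hB := lemB q h1 i
    have e : 2*(i+1) = 2*i+2 := by ring
    rw [e]
    linear_combination (q^(2*(t+1-(i+1))) * auxF q (2*(t+1-(i+1)))) * hB
  rw [Finset.sum_congr rfl step2, Finset.sum_congr rfl step3]
  have step4 : ∀ k ∈ Finset.range (t+1),
      auxG q k * auxF q (2*t+1-2*k) =
      auxG q k * (q^(2*(t-k)+1) * auxF q (2*(t-k)+1))
      + auxG q k * (q^(2*(t+1-(k+1))) * auxF q (2*(t+1-(k+1)))) := by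
    intro k hk
    have hk' : k < t+1 := Finset.mem_range.mp hk
    have e1 : 2*t+1-2*k = 2*(t-k)+1 := by omega
    have e2 : t+1-(k+1) = t-k := by omega
    rw [e1, e2]
    have hA := lemA q h1 (2*(t-k))
    linear_combination (auxG q k) * hA
  rw [Finset.sum_congr rfl step4, Finset.sum_add_distrib]
  ring

lemma S_eq (n : ℕ) : auxS q n = 1 / qPoch q q n := by
  induction n with
  | zero =>
      simp [auxS, auxG_zero, auxF_zero, qPoch_zero]
  | succ m ih =>
      have hstep : auxS q (m+1) * (1 - q^(m+1)) = auxS q m := by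
        rcases Nat.even_or_odd m with ⟨t, ht⟩ | ⟨t, ht⟩
        · rw [show m+1 = 2*t+1 by omega, show m = 2*t by omega]
          exact S_odd q h1 t
        · rw [show m+1 = 2*t+2 by omega, show m = 2*t+1 by omega]
          exact S_even q h1 t
      rw [ih] at hstep
      have h2 := h1 m
      have hP := qPoch_q_ne q h1 m
      rw [qPoch_q_succ, eq_div_iff (mul_ne_zero hP h2)]
      field_simp at hstep
      linear_combination hstep

end tel

lemma auxS_def (q : ℂ) (n : ℕ) :
    auxS q n = ∑ k ∈ Finset.range (n/2+1), auxG q k * auxF q (n-2*k) := rfl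

noncomputable def auxB (q : ℂ) (n : ℕ) : ℂ := (-1)^n * (2:ℂ)⁻¹^n * q^(n*(n-1)/2)

section ident
variable (q : ℂ) (h1 : ∀ m : ℕ, (1:ℂ) - q^(m+1) ≠ 0)
include h1

lemma identI (n : ℕ) :
    ∑ k ∈ Finset.range (n/2+1),
      ((1:ℂ) - q)^(2*k) * auxB q (n-2*k) /
        (2^(2*k) * qFact q (n-2*k) * qPoch (q^2) (q^2) k)
    = (-1/2)^n / qFact q n := by
  have hq1 : (1:ℂ) - q ≠ 0 := by have := h1 0; simpa using this
  have step : ∀ k ∈ Finset.range (n/2+1),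
      ((1:ℂ) - q)^(2*k) * auxB q (n-2*k) /
        (2^(2*k) * qFact q (n-2*k) * qPoch (q^2) (q^2) k)
      = (-1/2)^n * (1-q)^n * (auxG q k * auxF q (n-2*k)) := by
    intro k hk
    have hk' : 2*k ≤ n := by have := Finset.mem_range.mp hk; omega
    set m := n - 2*k with hmdef
    have hm : n = m + 2*k := by omega
    rw [hm, auxB, auxF, auxG, qFact]
    have hP := qPoch_q_ne q h1 m
    have hP2 := qPoch_q2_ne q h1 k
    have hneg : ((-1:ℂ))^(m+2*k) = (-1)^m := by
      rw [pow_add, pow_mul, neg_one_sq, one_pow, mul_one]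
    field_simp
    have h2 : (1/2:ℂ)^(m+2*k) * 2^(2*k) = (1/2)^m := by
      rw [pow_add, mul_assoc, ← mul_pow]; norm_num
    rw [neg_pow (1/2:ℂ) (m+2*k), hneg]
    linear_combination (-((1-q)^(2*k) * (-1)^m * q^(m*(m-1)/2) * (1-q)^m)) * h2
  rw [Finset.sum_congr rfl step, ← Finset.mul_sum, ← auxS_def, S_eq q h1 n, qFact]
  have hP := qPoch_q_ne q h1 n
  field_simp

end ident

lemma qPoch_zero_left (c : ℂ) (k : ℕ) : qPoch 0 c k = 1 := by simp [qPoch]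

lemma h1ofq {q : ℝ} (hq : 0 < q) (hq1 : q < 1) :
    ∀ m : ℕ, (1:ℂ) - (q:ℂ)^(m+1) ≠ 0 := by
  intro m
  have hcast : (q:ℂ)^(m+1) = ((q^(m+1) : ℝ) : ℂ) := by push_cast; ring
  rw [hcast]
  have hlt : q^(m+1) < 1 := pow_lt_one₀ (le_of_lt hq) hq1 (Nat.succ_ne_zero m)
  intro h
  have h2 : ((q^(m+1):ℝ):ℂ) = 1 := by linear_combination -h
  have h3 : (q^(m+1):ℝ) = 1 := by exact_mod_cast h2
  linarith

open Filter in
lemma tendsto_qpow {q : ℝ} (hq : 0 < q) (hq1 : q < 1) :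
    Tendsto (fun α : ℝ => (((q ^ (2*α+2) : ℝ)) : ℂ)) atTop (nhds 0) := by
  have h2a : Tendsto (fun α : ℝ => 2*α+2) atTop atTop :=
    tendsto_atTop_add_const_right atTop 2 (tendsto_id.const_mul_atTop (by norm_num))
  have hr : Tendsto (fun α : ℝ => q ^ (2*α+2)) atTop (nhds 0) :=
    (tendsto_rpow_atTop_of_base_lt_one q (by linarith) hq1).comp h2a
  have := (Complex.continuous_ofReal.tendsto 0).comp hr
  exact this

open Filter in
lemma tendsto_qPoch {q : ℝ} (hq : 0 < q) (hq1 : q < 1) (c : ℂ) (k : ℕ) :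
    Tendsto (fun α : ℝ => qPoch (((q ^ (2*α+2) : ℝ)) : ℂ) c k) atTop (nhds 1) := by
  have hcont : Continuous fun a : ℂ => qPoch a c k := by
    unfold qPoch
    exact continuous_finset_prod _ fun i _ =>
      continuous_const.sub (continuous_id.mul continuous_const)
  have := (hcont.tendsto 0).comp (tendsto_qpow hq hq1)
  rw [qPoch_zero_left] at this
  exact this

noncomputable def auxT (qc x : ℂ) (b : ℕ → ℂ) (n k : ℕ) : ℂ :=
  (1 - qc)^(2*k) * b (n-2*k) /
    (2^(2*k) * qFact qc (n-2*k) * qPoch (qc^2) (qc^2) k * qPoch x (qc^2) k)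

noncomputable def auxL (qc : ℂ) (n k : ℕ) : ℂ :=
  (1 - qc)^(2*k) * auxB qc (n-2*k) /
    (2^(2*k) * qFact qc (n-2*k) * qPoch (qc^2) (qc^2) k)

lemma auxT_zero (qc x : ℂ) (b : ℕ → ℂ) (n : ℕ) :
    auxT qc x b n 0 = b n / qFact qc n := by
  simp [auxT, qPoch_zero]

lemma auxL_zero (qc : ℂ) (n : ℕ) : auxL qc n 0 = auxB qc n / qFact qc n := by
  simp [auxL, qPoch_zero]

open Filter in
/-- For `n ≥ 1`, `lim_{α→∞} β_{n,α}(q) = (-1)^n 2^{-n} q^{n(n-1)/2}`. -/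
theorem stmt19 (q : ℝ) (hq : 0 < q) (hq1 : q < 1)
    (β : ℝ → ℕ → ℂ) (hβ : ∀ α : ℝ, -1 < α → qBetaSpec q α (β α)) :
    ∀ n : ℕ, 1 ≤ n →
      Tendsto (fun α : ℝ => β α n) atTop
        (nhds ((-1) ^ n * ((2 : ℂ))⁻¹ ^ n * (q : ℂ) ^ (n * (n - 1) / 2))) := by
  have h1 := h1ofq hq hq1
  have hq0 : (1:ℂ) - (q:ℂ) ≠ 0 := by have := h1 0; simpa using this
  have hFne : ∀ m : ℕ, qFact (q:ℂ) m ≠ 0 := fun m =>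
    div_ne_zero (qPoch_q_ne _ h1 m) (pow_ne_zero _ hq0)
  have hP2ne := qPoch_q2_ne (q:ℂ) h1
  have key : ∀ n : ℕ, Tendsto (fun α : ℝ => β α n) atTop (nhds (auxB (q:ℂ) n)) := by
    intro n
    induction n using Nat.strong_induction_on with
    | _ n ih =>
    rcases Nat.eq_zero_or_pos n with hn0 | hn1
    · subst hn0
      have hB0 : auxB (q:ℂ) 0 = 1 := by simp [auxB]
      rw [hB0]
      apply Tendsto.congr' _ tendsto_const_nhds
      filter_upwards [eventually_gt_atTop (-1:ℝ)] with α hα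
      exact ((hβ α hα).1).symm
    · -- eventual formula for β α n
      have hev : ∀ᶠ α : ℝ in atTop, β α n =
          ((-1/2)^n / qFact (q:ℂ) n -
            ∑ i ∈ Finset.range (n/2),
              auxT (q:ℂ) (((q ^ (2*α+2) : ℝ)):ℂ) (β α) n (i+1)) * qFact (q:ℂ) n := by
        filter_upwards [eventually_gt_atTop (-1:ℝ)] with α hα
        have hspec : (∑ k ∈ Finset.range (n/2+1),
            auxT (q:ℂ) (((q ^ (2*α+2) : ℝ)):ℂ) (β α) n k) = (-1/2)^n / qFact (q:ℂ) n :=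
          (hβ α hα).2 n hn1
        rw [Finset.sum_range_succ', auxT_zero] at hspec
        have e1 : (-1/2)^n / qFact (q:ℂ) n -
            ∑ i ∈ Finset.range (n/2), auxT (q:ℂ) (((q ^ (2*α+2) : ℝ)):ℂ) (β α) n (i+1)
            = β α n / qFact (q:ℂ) n := by
          linear_combination -hspec
        rw [e1, div_mul_cancel₀ _ (hFne n)]
      -- limit of the explicit formula
      have hlim : Tendsto (fun α : ℝ =>
          ((-1/2)^n / qFact (q:ℂ) n -
            ∑ i ∈ Finset.range (n/2),
              auxT (q:ℂ) (((q ^ (2*α+2) : ℝ)):ℂ) (β α) n (i+1)) * qFact (q:ℂ) n) atTop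
          (nhds (((-1/2)^n / qFact (q:ℂ) n -
            ∑ i ∈ Finset.range (n/2), auxL (q:ℂ) n (i+1)) * qFact (q:ℂ) n)) := by
        apply Tendsto.mul_const
        apply Tendsto.const_sub
        apply tendsto_finset_sum
        intro i _
        have hm : n - 2*(i+1) < n := by omega
        have hnum : Tendsto (fun α : ℝ =>
            (1-(q:ℂ))^(2*(i+1)) * β α (n-2*(i+1))) atTop
            (nhds ((1-(q:ℂ))^(2*(i+1)) * auxB (q:ℂ) (n-2*(i+1)))) :=
          (ih _ hm).const_mul _
        have hden : Tendsto (fun α : ℝ =>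
            2^(2*(i+1)) * qFact (q:ℂ) (n-2*(i+1)) * qPoch ((q:ℂ)^2) ((q:ℂ)^2) (i+1) *
              qPoch (((q ^ (2*α+2) : ℝ)):ℂ) ((q:ℂ)^2) (i+1)) atTop
            (nhds (2^(2*(i+1)) * qFact (q:ℂ) (n-2*(i+1)) *
              qPoch ((q:ℂ)^2) ((q:ℂ)^2) (i+1) * 1)) :=
          (tendsto_qPoch hq hq1 _ _).const_mul _
        have hDne : (2:ℂ)^(2*(i+1)) * qFact (q:ℂ) (n-2*(i+1)) *
            qPoch ((q:ℂ)^2) ((q:ℂ)^2) (i+1) * 1 ≠ 0 := by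
          rw [mul_one]
          exact mul_ne_zero (mul_ne_zero (pow_ne_zero _ two_ne_zero) (hFne _)) (hP2ne _)
        have hdiv := hnum.div hden hDne
        have hLval : auxL (q:ℂ) n (i+1) =
            (1-(q:ℂ))^(2*(i+1)) * auxB (q:ℂ) (n-2*(i+1)) /
              (2^(2*(i+1)) * qFact (q:ℂ) (n-2*(i+1)) * qPoch ((q:ℂ)^2) ((q:ℂ)^2) (i+1) * 1) := by
          rw [mul_one]; rfl
        unfold auxT
        rw [hLval]
        exact hdiv
      -- value of the limit
      have hval : ((-1/2)^n / qFact (q:ℂ) n -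
          ∑ i ∈ Finset.range (n/2), auxL (q:ℂ) n (i+1)) * qFact (q:ℂ) n = auxB (q:ℂ) n := by
        have hid : (∑ k ∈ Finset.range (n/2+1), auxL (q:ℂ) n k)
            = (-1/2)^n / qFact (q:ℂ) n := identI (q:ℂ) h1 n
        rw [Finset.sum_range_succ', auxL_zero] at hid
        have e1 : (-1/2)^n / qFact (q:ℂ) n -
            ∑ i ∈ Finset.range (n/2), auxL (q:ℂ) n (i+1)
            = auxB (q:ℂ) n / qFact (q:ℂ) n := by
          linear_combination -hid
        rw [e1, div_mul_cancel₀ _ (hFne n)]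
      rw [← hval]
      exact Tendsto.congr' (by filter_upwards [hev] with α h using h.symm) hlim
  intro n _
  exact key n
end
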